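/- For any positive integers a < b < c with gcd(a, b, c) = 1, there exists a real θ such that cos aθ + cos bθ + cos cθ ≤ −(17 + 7√7)/27. -/

import Mathlib

open Real


-- numeric bounds
lemma sqrt7_le : Real.sqrt 7 ≤ 2.65 := by
  nlinarith [Real.sq_sqrt (show (0:ℝ) ≤ 7 by norm_num), Real.sqrt_nonneg 7]

lemma sqrt3_ge : (1.7:ℝ) ≤ Real.sqrt 3 := by
  nlinarith [Real.sq_sqrt (show (0:ℝ) ≤ 3 by norm_num), Real.sqrt_nonneg 3]

lemma sqrt2_ge : (1.41:ℝ) ≤ Real.sqrt 2 := by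
  nlinarith [Real.sq_sqrt (show (0:ℝ) ≤ 2 by norm_num), Real.sqrt_nonneg 2]

-- the key pointwise trig identity
lemma keyid (A B : ℝ) :
    (2 - 2*Real.cos A) * (2 - 2*Real.cos B) * (Real.cos A + Real.cos B + 1/2)
      = -2 + 4*Real.cos A + 4*Real.cos B - 2*Real.cos (2*A) - 2*Real.cos (2*B)
        - 3*Real.cos (A+B) - 3*Real.cos (B-A) + Real.cos (2*A+B) + Real.cos (2*A-B)
        + Real.cos (A+2*B) + Real.cos (2*B-A) := by
  simp only [Real.cos_add, Real.cos_sub, Real.cos_two_mul, Real.sin_two_mul]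
  ring

lemma not_dvd_helper {c m : ℤ} (hc : 0 < c) (h1 : -c < m) (h2 : m < 3*c)
    (h3 : m ≠ 0) (h4 : m ≠ c) (h5 : m ≠ 2*c) : ¬ c ∣ m := by
  rintro ⟨d, rfl⟩
  have hd0 : 0 ≤ d := by
    by_contra h
    push_neg at h
    have : d ≤ -1 := by omega
    nlinarith
  have hd3 : d < 3 := by
    by_contra h
    push_neg at h
    nlinarith
  have : d = 0 ∨ d = 1 ∨ d = 2 := by omega
  rcases this with rfl | rfl | rfl
  · exact h3 (by ring)
  · exact h4 (by ring)
  · exact h5 (by ring)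

lemma sum_cos_eq_zero {c : ℕ} (hc : 0 < c) {m : ℤ} (hm : ¬ ((c:ℤ) ∣ m)) :
    ∑ k ∈ Finset.range c, Real.cos ((m:ℝ) * (π * (2*(k:ℝ)+1) / c)) = 0 := by
  have hc0 : (c:ℝ) ≠ 0 := Nat.cast_ne_zero.2 hc.ne'
  have hcC : (c:ℂ) ≠ 0 := Nat.cast_ne_zero.2 hc.ne'
  set r : ℂ := Complex.exp (2 * π * (m:ℝ) / c * Complex.I) with hr
  have hr1 : r ≠ 1 := by
    intro h1
    rw [hr, Complex.exp_eq_one_iff] at h1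
    obtain ⟨n, hn⟩ := h1
    apply hm
    refine ⟨n, ?_⟩
    have h2 : (2 * (π:ℂ) * Complex.I) ≠ 0 := by
      simp [Real.pi_ne_zero, Complex.I_ne_zero, Complex.ofReal_ne_zero]
    have : ((m:ℂ)) = (c:ℂ) * n := by
      field_simp at hn
      apply mul_left_cancel₀ h2
      push_cast at hn ⊢
      linear_combination (2 * (π:ℂ) * Complex.I) * hn
    exact_mod_cast this
  have hsum : ∑ k ∈ Finset.range c,
      Complex.exp ((((m:ℝ) * (π * (2*(k:ℝ)+1) / c)) : ℝ) * Complex.I) = 0 := by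
    have hpt : ∀ k ∈ Finset.range c,
        Complex.exp ((((m:ℝ) * (π * (2*(k:ℝ)+1) / c)) : ℝ) * Complex.I)
          = Complex.exp ((π : ℂ) * m / c * Complex.I) * r ^ k := by
      intro k _
      rw [hr, ← Complex.exp_nat_mul, ← Complex.exp_add]
      congr 1
      push_cast
      field_simp
      ring
    rw [Finset.sum_congr rfl hpt, ← Finset.mul_sum, geom_sum_eq hr1]
    have hrc : r ^ c = 1 := by
      rw [hr, ← Complex.exp_nat_mul]
      have : (c:ℂ) * (2 * π * (m:ℝ) / c * Complex.I) = (m:ℤ) * (2 * π * Complex.I) := by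
        push_cast
        field_simp
      rw [this, Complex.exp_int_mul_two_pi_mul_I]
    rw [hrc, sub_self, zero_div, mul_zero]
  calc ∑ k ∈ Finset.range c, Real.cos ((m:ℝ) * (π * (2*(k:ℝ)+1) / c))
      = (∑ k ∈ Finset.range c,
          Complex.exp ((((m:ℝ) * (π * (2*(k:ℝ)+1) / c)) : ℝ) * Complex.I)).re := by
        rw [Complex.re_sum]
        exact Finset.sum_congr rfl fun k _ => (Complex.exp_ofReal_mul_I_re _).symm
    _ = 0 := by rw [hsum]; rfl

set_option maxHeartbeats 2000000 in
lemma case1 (a b c : ℕ) (ha : 0 < a) (hab : a < b) (hbc : b < c) (hne : c ≠ a + b) :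
    ∃ θ : ℝ, Real.cos (a * θ) + Real.cos (b * θ) + Real.cos (c * θ)
      ≤ -(17 + 7 * Real.sqrt 7) / 27 := by
  have hc : 0 < c := by omega
  have hc0 : (c:ℝ) ≠ 0 := Nat.cast_ne_zero.2 hc.ne'
  have hcR : (0:ℝ) < c := by exact_mod_cast hc
  set θk : ℕ → ℝ := fun k => π * (2*(k:ℝ)+1) / c with hθk
  set g : ℤ → ℕ → ℝ := fun m k => Real.cos ((m:ℝ) * θk k) with hg
  set T : ℤ → ℝ := fun m => ∑ k ∈ Finset.range c, g m k with hT
  have hTz : ∀ m : ℤ, -(c:ℤ) < m → m < 3*c → m ≠ 0 → m ≠ c → m ≠ 2*c → T m = 0 := by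
    intro m h1 h2 h3 h4 h5
    exact sum_cos_eq_zero hc (not_dvd_helper (by exact_mod_cast hc) h1 h2 h3 h4 h5)
  have hT0 : T 0 = (c:ℝ) := by
    show (∑ k ∈ Finset.range c, g 0 k) = (c:ℝ)
    have hpt : ∀ k ∈ Finset.range c, g 0 k = 1 := by
      intro k _
      simp only [hg]
      norm_num
    rw [Finset.sum_congr rfl hpt]
    simp
  have hTc : T ((c:ℕ):ℤ) = -(c:ℝ) := by
    show (∑ k ∈ Finset.range c, g ((c:ℕ):ℤ) k) = -(c:ℝ)
    have hpt : ∀ k ∈ Finset.range c, g ((c:ℕ):ℤ) k = -1 := by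
      intro k _
      simp only [hg]
      push_cast
      rw [show (c:ℝ) * θk k = (k:ℝ) * (2*π) + π by rw [hθk]; field_simp]
      exact_mod_cast Real.cos_nat_mul_two_pi_add_pi k
    rw [Finset.sum_congr rfl hpt]
    simp
  have hT2c : T (2*((c:ℕ):ℤ)) = (c:ℝ) := by
    show (∑ k ∈ Finset.range c, g (2*((c:ℕ):ℤ)) k) = (c:ℝ)
    have hpt : ∀ k ∈ Finset.range c, g (2*((c:ℕ):ℤ)) k = 1 := by
      intro k _
      simp only [hg]
      push_cast
      rw [show 2 * (c:ℝ) * θk k = 0 + ((2*k+1 : ℕ):ℝ) * (2*π) by rw [hθk]; push_cast; field_simp; ring]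
      rw [Real.cos_add_nat_mul_two_pi, Real.cos_zero]
    rw [Finset.sum_congr rfl hpt]
    simp
  have point : ∀ k ∈ Finset.range c,
      (2 - 2*g a k) * (2 - 2*g b k) * (g a k + g b k + 1/2)
        = -2 + 4*g a k + 4*g b k - 2*g (2*a) k - 2*g (2*b) k
          - 3*g ((a:ℤ)+b) k - 3*g ((b:ℤ)-a) k + g (2*(a:ℤ)+b) k + g (2*(a:ℤ)-b) k
          + g ((a:ℤ)+2*b) k + g (2*(b:ℤ)-a) k := by
    intro k _
    simp only [hg]
    push_cast
    rw [show 2 * (a:ℝ) * θk k = 2*((a:ℝ) * θk k) by ring,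
        show 2 * (b:ℝ) * θk k = 2*((b:ℝ) * θk k) by ring,
        show ((a:ℝ) + b) * θk k = (a:ℝ) * θk k + (b:ℝ) * θk k by ring,
        show ((b:ℝ) - a) * θk k = (b:ℝ) * θk k - (a:ℝ) * θk k by ring,
        show (2*(a:ℝ) + b) * θk k = 2*((a:ℝ) * θk k) + (b:ℝ) * θk k by ring,
        show (2*(a:ℝ) - b) * θk k = 2*((a:ℝ) * θk k) - (b:ℝ) * θk k by ring,
        show ((a:ℝ) + 2*b) * θk k = (a:ℝ) * θk k + 2*((b:ℝ) * θk k) by ring,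
        show (2*(b:ℝ) - a) * θk k = 2*((b:ℝ) * θk k) - (a:ℝ) * θk k by ring]
    exact keyid _ _
  set Q : ℝ := ∑ k ∈ Finset.range c, (2 - 2*g a k) * (2 - 2*g b k) * (g a k + g b k + 1/2) with hQdef
  have hQ : Q = -2*c + 4*T a + 4*T b - 2*T (2*a) - 2*T (2*b)
      - 3*T ((a:ℤ)+b) - 3*T ((b:ℤ)-a) + T (2*(a:ℤ)+b) + T (2*(a:ℤ)-b)
      + T ((a:ℤ)+2*b) + T (2*(b:ℤ)-a) := by
    rw [hQdef, Finset.sum_congr rfl point]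
    simp only [hT, Finset.sum_add_distrib, Finset.sum_sub_distrib, Finset.sum_const,
      Finset.card_range, nsmul_eq_mul, ← Finset.mul_sum]
    ring
  have hTa : T a = 0 := hTz _ (by omega) (by omega) (by omega) (by omega) (by omega)
  have hTb : T b = 0 := hTz _ (by omega) (by omega) (by omega) (by omega) (by omega)
  have hTab : T ((a:ℤ)+b) = 0 := hTz _ (by omega) (by omega) (by omega) (by omega) (by omega)
  have hTba : T ((b:ℤ)-a) = 0 := hTz _ (by omega) (by omega) (by omega) (by omega) (by omega)
  have hT2a : T (2*(a:ℤ)) = if 2*a = c then -(c:ℝ) else 0 := by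
    split_ifs with h
    · rw [show (2*((a:ℕ):ℤ)) = ((c:ℕ):ℤ) by omega]; exact hTc
    · exact hTz _ (by omega) (by omega) (by omega) (by omega) (by omega)
  have hT2b : T (2*(b:ℤ)) = if 2*b = c then -(c:ℝ) else 0 := by
    split_ifs with h
    · rw [show (2*((b:ℕ):ℤ)) = ((c:ℕ):ℤ) by omega]; exact hTc
    · exact hTz _ (by omega) (by omega) (by omega) (by omega) (by omega)
  have hT2ab : T (2*(a:ℤ)+b) = if 2*a+b = c then -(c:ℝ) else if 2*a+b = 2*c then (c:ℝ) else 0 := by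
    split_ifs with h h'
    · rw [show (2*((a:ℕ):ℤ)+b) = ((c:ℕ):ℤ) by omega]; exact hTc
    · rw [show (2*((a:ℕ):ℤ)+b) = 2*((c:ℕ):ℤ) by omega]; exact hT2c
    · exact hTz _ (by omega) (by omega) (by omega) (by omega) (by omega)
  have hTa2b : T ((a:ℤ)+2*b) = if a+2*b = c then -(c:ℝ) else if a+2*b = 2*c then (c:ℝ) else 0 := by
    split_ifs with h h'
    · rw [show (((a:ℕ):ℤ)+2*b) = ((c:ℕ):ℤ) by omega]; exact hTc
    · rw [show (((a:ℕ):ℤ)+2*b) = 2*((c:ℕ):ℤ) by omega]; exact hT2c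
    · exact hTz _ (by omega) (by omega) (by omega) (by omega) (by omega)
  have hT2amb : T (2*(a:ℤ)-b) = if b = 2*a then (c:ℝ) else 0 := by
    split_ifs with h
    · rw [show (2*((a:ℕ):ℤ)-b) = (0:ℤ) by omega]; exact hT0
    · exact hTz _ (by omega) (by omega) (by omega) (by omega) (by omega)
  have hT2bma : T (2*(b:ℤ)-a) = if 2*b-a = c then -(c:ℝ) else 0 := by
    split_ifs with h
    · rw [show (2*((b:ℕ):ℤ)-a) = ((c:ℕ):ℤ) by omega]; exact hTc
    · exact hTz _ (by omega) (by omega) (by omega) (by omega) (by omega)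
  have hQle : Q ≤ 0 := by
    rw [hQ, hTa, hTb, hTab, hTba, hT2a, hT2b, hT2ab, hTa2b, hT2amb, hT2bma]
    clear hQ hQdef point hTz hT0 hTc hT2c hTa hTb hTab hTba hT2a hT2b hT2ab hTa2b hT2amb hT2bma hg hθk hT
    split_ifs <;> first | (exfalso; omega) | linarith
  by_contra hcon
  push_neg at hcon
  have hlam : (17 + 7*Real.sqrt 7)/27 < 3/2 := by nlinarith [sqrt7_le, Real.sqrt_nonneg 7]
  have hgnat : ∀ (n:ℕ) (k:ℕ), g ((n:ℕ):ℤ) k = Real.cos ((n:ℝ) * θk k) := by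
    intro n k
    simp only [hg]
    norm_num
  have hcosc : ∀ k : ℕ, Real.cos ((c:ℝ) * θk k) = -1 := by
    intro k
    rw [show (c:ℝ) * θk k = (k:ℝ) * (2*π) + π by rw [hθk]; field_simp]
    exact_mod_cast Real.cos_nat_mul_two_pi_add_pi k
  have hthird : ∀ k : ℕ, 0 < g a k + g b k + 1/2 := by
    intro k
    have h1 := hcon (θk k)
    rw [hcosc k] at h1
    rw [hgnat a k, hgnat b k]
    nlinarith [hlam]
  have hterm : ∀ k ∈ Finset.range c,
      0 ≤ (2 - 2*g a k) * (2 - 2*g b k) * (g a k + g b k + 1/2) := by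
    intro k _
    have c1 : g a k ≤ 1 := by rw [hgnat a k]; exact Real.cos_le_one _
    have c2 : g b k ≤ 1 := by rw [hgnat b k]; exact Real.cos_le_one _
    exact mul_nonneg (mul_nonneg (by linarith) (by linarith)) (hthird k).le
  have hpos : 0 < (2 - 2*g a 0) * (2 - 2*g b 0) * (g a 0 + g b 0 + 1/2) := by
    have hpi := Real.pi_pos
    have hθ0 : θk 0 = π / c := by rw [hθk]; norm_num
    have haθ : (0:ℝ) < (a:ℝ) * θk 0 := by
      rw [hθ0]
      have : (0:ℝ) < (a:ℝ) := by exact_mod_cast ha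
      positivity
    have haθ2 : (a:ℝ) * θk 0 ≤ π := by
      rw [hθ0, show (a:ℝ) * (π / c) = (a:ℝ)*π/c by ring, div_le_iff₀ hcR]
      have : (a:ℝ) ≤ c := by exact_mod_cast (by omega : a ≤ c)
      nlinarith
    have hbθ : (0:ℝ) < (b:ℝ) * θk 0 := by
      rw [hθ0]
      have : (0:ℝ) < (b:ℝ) := by exact_mod_cast (by omega : 0 < b)
      positivity
    have hbθ2 : (b:ℝ) * θk 0 ≤ π := by
      rw [hθ0, show (b:ℝ) * (π / c) = (b:ℝ)*π/c by ring, div_le_iff₀ hcR]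
      have : (b:ℝ) ≤ c := by exact_mod_cast (by omega : b ≤ c)
      nlinarith
    have ha1 : g a 0 < 1 := by
      rw [hgnat a 0, ← Real.cos_zero]
      exact Real.cos_lt_cos_of_nonneg_of_le_pi le_rfl haθ2 haθ
    have hb1 : g b 0 < 1 := by
      rw [hgnat b 0, ← Real.cos_zero]
      exact Real.cos_lt_cos_of_nonneg_of_le_pi le_rfl hbθ2 hbθ
    have h3 := hthird 0
    apply mul_pos (mul_pos (by linarith) (by linarith)) h3
  have hQpos : 0 < Q := by
    rw [hQdef]
    calc (0:ℝ) < (2 - 2*g a 0) * (2 - 2*g b 0) * (g a 0 + g b 0 + 1/2) := hpos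
      _ ≤ ∑ k ∈ Finset.range c, (2 - 2*g a k) * (2 - 2*g b k) * (g a k + g b k + 1/2) :=
        Finset.single_le_sum hterm (Finset.mem_range.2 hc)
  linarith

lemma bound_final : (17 + 7*Real.sqrt 7)/27 ≤ Real.sqrt 3/2 + 1/2 := by
  nlinarith [sqrt7_le, sqrt3_ge]

lemma case2 (a b : ℕ) (ha : 0 < a) (hab : a < b) (hb4 : 4 ≤ b) (hcop : Nat.gcd a b = 1) :
    ∃ θ : ℝ, Real.cos (a * θ) + Real.cos (b * θ) + Real.cos ((a+b : ℕ) * θ)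
      ≤ -(17 + 7 * Real.sqrt 7) / 27 := by
  have hbR : (0:ℝ) < b := by exact_mod_cast (by omega : 0 < b)
  have hbne : (b:ℝ) ≠ 0 := hbR.ne'
  have hpi := Real.pi_pos
  set s : ℤ := ((b:ℤ) - a + 1)/3 with hs
  set e : ℤ := 3*s - ((b:ℤ) - a) with he_def
  have he : e = -1 ∨ e = 0 ∨ e = 1 := by omega
  have hbez : (a:ℤ) * (Nat.gcdA a b) + (b:ℤ) * (Nat.gcdB a b) = 1 := by
    have h := Nat.gcd_eq_gcd_ab a b
    rw [hcop] at h
    exact_mod_cast h.symm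
  set m : ℤ := s * Nat.gcdA a b with hm
  set t : ℤ := s * Nat.gcdB a b with ht
  have ham : (a:ℤ) * m = s - b * t := by
    rw [hm, ht]
    linear_combination s * hbez
  set θ : ℝ := 2*π*(1+3*(m:ℝ))/(3*b) with hθ
  refine ⟨θ, ?_⟩
  -- angle computations
  have hbθ : (b:ℝ)*θ = 2*π/3 + (m:ℤ)*(2*π) := by
    rw [hθ]
    push_cast
    field_simp
  have hcosb : Real.cos ((b:ℝ)*θ) = -(1/2) := by
    rw [hbθ, Real.cos_add_int_mul_two_pi,
      show 2*π/3 = π - π/3 by ring, Real.cos_pi_sub, Real.cos_pi_div_three]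
  set u : ℝ := π + 2*π*(e:ℝ)/(3*b) with hu
  have hae : (a:ℝ)*(1+3*(m:ℝ)) = (b:ℝ) + e - 3*b*t := by
    have ham' : (a:ℝ)*(m:ℝ) = (s:ℝ) - b*t := by exact_mod_cast ham
    have h3s : 3*(s:ℝ) = (b:ℝ) - a + e := by
      have : 3*s = (b:ℤ) - a + e := by omega
      exact_mod_cast this
    linear_combination 3*ham' + h3s
  have haθ : (a:ℝ)*θ = (u - π/3) + ((-t : ℤ):ℝ)*(2*π) := by
    have h1 : (a:ℝ)*θ = 2*π*((a:ℝ)*(1+3*(m:ℝ)))/(3*b) := by rw [hθ]; ring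
    rw [h1, hae, hu]
    push_cast
    field_simp
    ring
  have hcosa : Real.cos ((a:ℝ)*θ) = Real.cos (u - π/3) := by
    rw [haθ, Real.cos_add_int_mul_two_pi]
  have hcθ : ((a+b:ℕ):ℝ)*θ = (u + π/3) + ((m - t : ℤ):ℝ)*(2*π) := by
    push_cast
    push_cast at haθ hbθ
    linear_combination haθ + hbθ
  have hcosc : Real.cos (((a+b:ℕ):ℝ)*θ) = Real.cos (u + π/3) := by
    rw [hcθ, Real.cos_add_int_mul_two_pi]
  have hsum : Real.cos ((a:ℝ)*θ) + Real.cos ((b:ℝ)*θ) + Real.cos (((a+b:ℕ):ℝ)*θ)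
      = Real.cos u - 1/2 := by
    rw [hcosa, hcosb, hcosc, Real.cos_add, Real.cos_sub, Real.cos_pi_div_three]
    ring
  rw [hsum]
  -- cos u = -cos(2πe/(3b))
  have hcosu : Real.cos u = -Real.cos (2*π*(e:ℝ)/(3*b)) := by
    rw [hu, Real.cos_add, Real.cos_pi, Real.sin_pi]
    ring
  -- bound
  have hb6 : 2*π/(3*b) ≤ π/6 := by
    rw [div_le_div_iff₀ (by positivity) (by norm_num)]
    have : (4:ℝ) ≤ b := by exact_mod_cast hb4
    nlinarith
  have hkey : Real.cos (2*π*(e:ℝ)/(3*b)) ≥ Real.sqrt 3 / 2 := by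
    have hmono : Real.cos (2*π/(3*b)) ≥ Real.sqrt 3 / 2 := by
      rw [← Real.cos_pi_div_six]
      apply Real.cos_le_cos_of_nonneg_of_le_pi (by positivity)
        (by linarith [Real.pi_pos]) hb6
    rcases he with h | h | h <;> rw [h]
    · push_cast
      rw [show 2*π*(-1)/(3*(b:ℝ)) = -(2*π/(3*b)) by ring, Real.cos_neg]
      exact hmono
    · push_cast
      norm_num
      nlinarith [Real.sq_sqrt (show (0:ℝ) ≤ 3 by norm_num), Real.sqrt_nonneg 3]
    · push_cast
      rw [show 2*π*1/(3*(b:ℝ)) = 2*π/(3*b) by ring]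
      exact hmono
  rw [hcosu]
  have := bound_final
  linarith

lemma triple123 : ∃ θ : ℝ, Real.cos θ + Real.cos (2 * θ) + Real.cos (3 * θ)
    ≤ -(17 + 7 * Real.sqrt 7) / 27 := by
  have h7 : Real.sqrt 7 ^ 2 = 7 := Real.sq_sqrt (by norm_num)
  have h7n := Real.sqrt_nonneg 7
  set x : ℝ := (Real.sqrt 7 - 1)/6 with hx
  refine ⟨Real.arccos x, ?_⟩
  have hcos : Real.cos (Real.arccos x) = x := by
    apply Real.cos_arccos
    · rw [hx]; linarith
    · rw [hx]; nlinarith [sqrt7_le]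
  rw [Real.cos_two_mul, Real.cos_three_mul, hcos]
  apply le_of_eq
  rw [hx]
  linear_combination (Real.sqrt 7 / 54) * h7

lemma triple134 : ∃ θ : ℝ, Real.cos θ + Real.cos (3 * θ) + Real.cos (4 * θ)
    ≤ -(17 + 7 * Real.sqrt 7) / 27 := by
  refine ⟨5*π/6, ?_⟩
  rw [show (5:ℝ)*π/6 = π - π/6 by ring, Real.cos_pi_sub, Real.cos_pi_div_six,
      show (3:ℝ)*(π - π/6) = π/2 + (1:ℕ)*(2*π) by push_cast; ring,
      Real.cos_add_nat_mul_two_pi, Real.cos_pi_div_two,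
      show (4:ℝ)*(π - π/6) = (2*π - (π - π/3)) + (1:ℕ)*(2*π) by push_cast; ring,
      Real.cos_add_nat_mul_two_pi, Real.cos_two_pi_sub, Real.cos_pi_sub, Real.cos_pi_div_three]
  nlinarith [sqrt7_le, sqrt3_ge, Real.sq_sqrt (show (0:ℝ) ≤ 3 by norm_num), Real.sqrt_nonneg 3]

lemma triple235 : ∃ θ : ℝ, Real.cos (2*θ) + Real.cos (3 * θ) + Real.cos (5 * θ)
    ≤ -(17 + 7 * Real.sqrt 7) / 27 := by
  refine ⟨π/4, ?_⟩
  rw [show (2:ℝ)*(π/4) = π/2 by ring, Real.cos_pi_div_two,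
      show (3:ℝ)*(π/4) = π - π/4 by ring, Real.cos_pi_sub, Real.cos_pi_div_four,
      show (5:ℝ)*(π/4) = 2*π - (π - π/4) by ring, Real.cos_two_pi_sub, Real.cos_pi_sub,
      Real.cos_pi_div_four]
  nlinarith [sqrt7_le, Real.sq_sqrt (show (0:ℝ) ≤ 2 by norm_num), Real.sqrt_nonneg 2]

theorem stmt_9 (a b c : ℕ) (ha : 0 < a) (hab : a < b) (hbc : b < c)
    (hgcd : Nat.gcd (Nat.gcd a b) c = 1) :
    ∃ θ : ℝ, cos (a * θ) + cos (b * θ) + cos (c * θ)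
      ≤ -(17 + 7 * Real.sqrt 7) / 27 := by
  by_cases hc : c = a + b
  · -- c = a + b
    have hcop : Nat.gcd a b = 1 := by
      have hd : Nat.gcd a b ∣ c := hc ▸ Nat.dvd_add (Nat.gcd_dvd_left a b) (Nat.gcd_dvd_right a b)
      have : Nat.gcd a b ∣ Nat.gcd (Nat.gcd a b) c := Nat.dvd_gcd dvd_rfl hd
      rw [hgcd] at this
      exact Nat.dvd_one.mp this
    by_cases hb4 : 4 ≤ b
    · subst hc
      exact case2 a b ha hab hb4 hcop
    · -- b ≤ 3
      push_neg at hb4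
      have hb23 : b = 2 ∨ b = 3 := by omega
      rcases hb23 with rfl | rfl
      · -- b = 2, a = 1, c = 3
        have ha1 : a = 1 := by omega
        subst ha1
        subst hc
        obtain ⟨θ, hθ⟩ := triple123
        refine ⟨θ, ?_⟩
        rw [show ((1:ℕ):ℝ) * θ = θ by push_cast; ring,
            show ((2:ℕ):ℝ) * θ = 2*θ by push_cast; ring,
            show (((1+2:ℕ)):ℝ) * θ = 3*θ by push_cast; ring]
        exact hθ
      · -- b = 3
        have : a = 1 ∨ a = 2 := by omega
        rcases this with rfl | rfl
        · subst hc
          obtain ⟨θ, hθ⟩ := triple134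
          refine ⟨θ, ?_⟩
          rw [show ((1:ℕ):ℝ) * θ = θ by push_cast; ring,
              show ((3:ℕ):ℝ) * θ = 3*θ by push_cast; ring,
              show (((1+3:ℕ)):ℝ) * θ = 4*θ by push_cast; ring]
          exact hθ
        · subst hc
          obtain ⟨θ, hθ⟩ := triple235
          refine ⟨θ, ?_⟩
          rw [show ((2:ℕ):ℝ) * θ = 2*θ by push_cast; ring,
              show ((3:ℕ):ℝ) * θ = 3*θ by push_cast; ring,
              show (((2+3:ℕ)):ℝ) * θ = 5*θ by push_cast; ring]
          exact hθ
  · exact case1 a b c ha hab hbc hc
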